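/- Existence of the Goursat solution by Picard iteration: for bounded continuous C : [0,T]² → R, the sequence U_0 ≡ 1, U_{n+1}(s,t) = 1 + ∫_0^s∫_0^t C(u,v) U_n(u,v) du dv converges uniformly on [0,T]² to a continuous solution U of U(s,t) = 1 + ∫_0^s∫_0^t C(u,v)U(u,v)dudv, and the iterates satisfy |U_{n+1}(s,t) − U_n(s,t)| ≤ (K s t)^{n+1}/((n+1)!)², where K bounds |C|. -/

import Mathlib

open MeasureTheory intervalIntegral Set

namespace GoursatAux

noncomputable def pic (C : ℝ → ℝ → ℝ) : ℕ → ℝ → ℝ → ℝ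
  | 0 => fun _ _ => 1
  | n + 1 => fun s t => 1 + ∫ u in (0:ℝ)..s, ∫ v in (0:ℝ)..t, C u v * pic C n u v

lemma pic_succ (C : ℝ → ℝ → ℝ) (n : ℕ) (s t : ℝ) :
    pic C (n + 1) s t = 1 + ∫ u in (0:ℝ)..s, ∫ v in (0:ℝ)..t, C u v * pic C n u v := rfl

variable {C : ℝ → ℝ → ℝ} {K : ℝ}

lemma pic_cont (hC : Continuous (Function.uncurry C)) :
    ∀ n, Continuous (Function.uncurry (pic C n))
  | 0 => continuous_const
  | n + 1 => by
    have ih := pic_cont hC n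
    have hG : Continuous (fun q : ℝ × ℝ => C q.1 q.2 * pic C n q.1 q.2) := hC.mul ih
    have hf : Continuous (Function.uncurry
        (fun (q : ℝ × ℝ) (u : ℝ) => ∫ v in (0:ℝ)..q.2, C u v * pic C n u v)) := by
      apply continuous_parametric_intervalIntegral_of_continuous
        (f := fun (r : (ℝ × ℝ) × ℝ) (v : ℝ) => C r.2 v * pic C n r.2 v)
        (s := fun r : (ℝ × ℝ) × ℝ => r.1.2)
      · exact hG.comp ((continuous_snd.comp continuous_fst).prodMk continuous_snd)
      · exact continuous_snd.comp continuous_fst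
    have : Continuous fun q : ℝ × ℝ =>
        ∫ u in (0:ℝ)..q.1, ∫ v in (0:ℝ)..q.2, C u v * pic C n u v :=
      continuous_parametric_intervalIntegral_of_continuous hf continuous_fst
    exact continuous_const.add this

/-- Continuity of the inner partial integral, jointly in `(u, t)`. -/
lemma inner_cont (hC : Continuous (Function.uncurry C)) (n : ℕ) :
    Continuous (fun q : ℝ × ℝ => ∫ v in (0:ℝ)..q.2, C q.1 v * pic C n q.1 v) := by
  apply continuous_parametric_intervalIntegral_of_continuous
    (f := fun (q : ℝ × ℝ) (v : ℝ) => C q.1 v * pic C n q.1 v) (s := fun q : ℝ × ℝ => q.2)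
  · exact (hC.mul (pic_cont hC n)).comp
      ((continuous_fst.comp continuous_fst).prodMk continuous_snd)
  · exact continuous_snd

end GoursatAux

namespace GoursatAux

lemma icont {F : ℝ → ℝ → ℝ} (hF : Continuous (Function.uncurry F)) (t : ℝ) :
    Continuous fun u : ℝ => ∫ v in (0:ℝ)..t, F u v :=
  continuous_parametric_intervalIntegral_of_continuous' hF 0 t

lemma double_sub {F G : ℝ → ℝ → ℝ} (hF : Continuous (Function.uncurry F))
    (hG : Continuous (Function.uncurry G)) (s t : ℝ) :
    (∫ u in (0:ℝ)..s, ∫ v in (0:ℝ)..t, F u v) - (∫ u in (0:ℝ)..s, ∫ v in (0:ℝ)..t, G u v)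
      = ∫ u in (0:ℝ)..s, ∫ v in (0:ℝ)..t, (F u v - G u v) := by
  rw [← intervalIntegral.integral_sub ((icont hF t).intervalIntegrable 0 s)
    ((icont hG t).intervalIntegrable 0 s)]
  refine intervalIntegral.integral_congr fun u _ => ?_
  rw [← intervalIntegral.integral_sub
    (Continuous.intervalIntegrable (u := fun v => F u v) (hF.comp (Continuous.prodMk_right u)) 0 t)
    (Continuous.intervalIntegrable (u := fun v => G u v) (hG.comp (Continuous.prodMk_right u)) 0 t)]

lemma double_bound {F B : ℝ → ℝ → ℝ} (hF : Continuous (Function.uncurry F))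
    (hB : Continuous (Function.uncurry B)) {s t : ℝ} (hs : 0 ≤ s) (ht : 0 ≤ t)
    (hb : ∀ u ∈ Icc (0:ℝ) s, ∀ v ∈ Icc (0:ℝ) t, |F u v| ≤ B u v) :
    |∫ u in (0:ℝ)..s, ∫ v in (0:ℝ)..t, F u v|
      ≤ ∫ u in (0:ℝ)..s, ∫ v in (0:ℝ)..t, B u v := by
  refine (intervalIntegral.abs_integral_le_integral_abs hs).trans
    (intervalIntegral.integral_mono_on hs ?_ ?_ ?_)
  · exact ((icont hF t).abs).intervalIntegrable 0 s
  · exact (icont hB t).intervalIntegrable 0 s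
  · intro u hu
    refine (intervalIntegral.abs_integral_le_integral_abs ht).trans
      (intervalIntegral.integral_mono_on ht ?_ ?_ ?_)
    · exact Continuous.intervalIntegrable (u := fun v => |F u v|)
        ((hF.comp (Continuous.prodMk_right u)).abs) 0 t
    · exact Continuous.intervalIntegrable (u := fun v => B u v)
        (hB.comp (Continuous.prodMk_right u)) 0 t
    · exact fun v hv => hb u hu v hv

lemma double_pow (c : ℝ) (m : ℕ) (s t : ℝ) :
    (∫ u in (0:ℝ)..s, ∫ v in (0:ℝ)..t, c * u ^ m * v ^ m)
      = c * (s ^ (m+1) / ((m:ℝ)+1)) * (t ^ (m+1) / ((m:ℝ)+1)) := by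
  have h1 : ∀ u : ℝ, (∫ v in (0:ℝ)..t, c * u ^ m * v ^ m)
      = (c * (t ^ (m+1) / ((m:ℝ)+1))) * u ^ m := by
    intro u
    rw [intervalIntegral.integral_const_mul, integral_pow]
    simp
    ring
  simp_rw [h1]
  rw [intervalIntegral.integral_const_mul, integral_pow]
  simp
  ring

variable {C : ℝ → ℝ → ℝ} {K : ℝ}

lemma pic_diff_bound (hC : Continuous (Function.uncurry C)) (hK : 0 ≤ K)
    (hCK : ∀ u v, |C u v| ≤ K) :
    ∀ n, ∀ s t : ℝ, 0 ≤ s → 0 ≤ t →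
      |pic C (n+1) s t - pic C n s t|
        ≤ K ^ (n+1) * s ^ (n+1) * t ^ (n+1) / ((n+1).factorial : ℝ) ^ 2 := by
  intro n
  induction n with
  | zero =>
    intro s t hs ht
    have key : pic C 1 s t - pic C 0 s t
        = ∫ u in (0:ℝ)..s, ∫ v in (0:ℝ)..t, C u v * pic C 0 u v := by
      rw [pic_succ C 0 s t]; simp [pic]
    rw [key]
    have hF : Continuous (Function.uncurry fun u v => C u v * pic C 0 u v) :=
      hC.mul (pic_cont hC 0)
    have hb : ∀ u ∈ Icc (0:ℝ) s, ∀ v ∈ Icc (0:ℝ) t,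
        |C u v * pic C 0 u v| ≤ K * u ^ 0 * v ^ 0 := by
      intro u _ v _
      simpa [pic] using hCK u v
    have h := double_bound hF (by fun_prop) hs ht hb
    rw [double_pow K 0 s t] at h
    refine h.trans (le_of_eq ?_)
    norm_num [Nat.factorial]
  | succ n ih =>
    intro s t hs ht
    set m := n + 1 with hm
    have hfacpos : (0:ℝ) < ((m).factorial : ℝ) := by positivity
    set c : ℝ := K ^ (m+1) / ((m).factorial : ℝ) ^ 2 with hc
    have hF : Continuous (Function.uncurry
        fun u v => C u v * (pic C (m) u v - pic C n u v)) :=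
      hC.mul ((pic_cont hC m).sub (pic_cont hC n))
    have key : pic C (m+1) s t - pic C m s t
        = ∫ u in (0:ℝ)..s, ∫ v in (0:ℝ)..t, C u v * (pic C m u v - pic C n u v) := by
      rw [pic_succ C m s t, pic_succ C n s t]
      have h2 := double_sub (F := fun u v => C u v * pic C m u v)
        (G := fun u v => C u v * pic C n u v)
        (hC.mul (pic_cont hC m)) (hC.mul (pic_cont hC n)) s t
      calc (1 + ∫ u in (0:ℝ)..s, ∫ v in (0:ℝ)..t, C u v * pic C m u v)
            - (1 + ∫ u in (0:ℝ)..s, ∫ v in (0:ℝ)..t, C u v * pic C n u v)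
          = (∫ u in (0:ℝ)..s, ∫ v in (0:ℝ)..t, C u v * pic C m u v)
            - ∫ u in (0:ℝ)..s, ∫ v in (0:ℝ)..t, C u v * pic C n u v := by ring
        _ = ∫ u in (0:ℝ)..s, ∫ v in (0:ℝ)..t,
              (C u v * pic C m u v - C u v * pic C n u v) := h2
        _ = ∫ u in (0:ℝ)..s, ∫ v in (0:ℝ)..t, C u v * (pic C m u v - pic C n u v) := by
            refine intervalIntegral.integral_congr fun u _ => ?_
            refine intervalIntegral.integral_congr fun v _ => ?_
            ring
    have hb : ∀ u ∈ Icc (0:ℝ) s, ∀ v ∈ Icc (0:ℝ) t,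
        |C u v * (pic C m u v - pic C n u v)| ≤ c * u ^ m * v ^ m := by
      intro u hu v hv
      rw [abs_mul]
      calc |C u v| * |pic C m u v - pic C n u v|
          ≤ K * (K ^ m * u ^ m * v ^ m / ((m).factorial : ℝ) ^ 2) :=
            mul_le_mul (hCK u v) (ih u v hu.1 hv.1) (abs_nonneg _) hK
        _ = c * u ^ m * v ^ m := by rw [hc]; field_simp; ring
    have hBc : Continuous (Function.uncurry fun u v : ℝ => c * u ^ m * v ^ m) := by fun_prop
    rw [key]
    calc |∫ u in (0:ℝ)..s, ∫ v in (0:ℝ)..t, C u v * (pic C m u v - pic C n u v)|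
        ≤ ∫ u in (0:ℝ)..s, ∫ v in (0:ℝ)..t, c * u ^ m * v ^ m :=
          double_bound hF hBc hs ht hb
      _ = c * (s ^ (m+1) / ((m:ℝ)+1)) * (t ^ (m+1) / ((m:ℝ)+1)) := double_pow c m s t
      _ = K ^ (m+1) * s ^ (m+1) * t ^ (m+1) / ((m+1).factorial : ℝ) ^ 2 := by
          have hfac : ((m+1).factorial : ℝ) = ((m:ℝ)+1) * ((m).factorial : ℝ) := by
            push_cast [Nat.factorial_succ]; ring
          have h1 : ((m).factorial : ℝ) ≠ 0 := ne_of_gt hfacpos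
          have h2 : (0:ℝ) < ((m:ℝ)+1) := by positivity
          rw [hc, hfac, mul_pow, div_mul_div_comm, div_mul_div_comm]
          rw [div_eq_div_iff (by positivity) (by positivity)]
          ring

end GoursatAux
set_option maxHeartbeats 1000000 in
theorem goursat_picard_existence (T K : ℝ) (hT : 0 ≤ T) (hK : 0 ≤ K) (C : ℝ → ℝ → ℝ)
    (hC : ContinuousOn (Function.uncurry C) (Icc 0 T ×ˢ Icc 0 T))
    (hCK : ∀ s ∈ Icc (0:ℝ) T, ∀ t ∈ Icc (0:ℝ) T, |C s t| ≤ K)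
    (U : ℕ → ℝ → ℝ → ℝ)
    (hU0 : ∀ s t : ℝ, U 0 s t = 1)
    (hUrec : ∀ n : ℕ, ∀ s t : ℝ,
      U (n + 1) s t = 1 + ∫ u in (0:ℝ)..s, ∫ v in (0:ℝ)..t, C u v * U n u v) :
    (∃ L : ℝ → ℝ → ℝ,
      ContinuousOn (Function.uncurry L) (Icc 0 T ×ˢ Icc 0 T)
      ∧ TendstoUniformlyOn (fun n (p : ℝ × ℝ) => U n p.1 p.2)
          (fun p => L p.1 p.2) Filter.atTop (Icc 0 T ×ˢ Icc 0 T)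
      ∧ (∀ s ∈ Icc (0:ℝ) T, ∀ t ∈ Icc (0:ℝ) T,
          L s t = 1 + ∫ u in (0:ℝ)..s, ∫ v in (0:ℝ)..t, C u v * L u v))
    ∧ (∀ n : ℕ, ∀ s ∈ Icc (0:ℝ) T, ∀ t ∈ Icc (0:ℝ) T,
        |U (n + 1) s t - U n s t| ≤ (K * s * t) ^ (n + 1) / ((Nat.factorial (n + 1) : ℝ)) ^ 2) := by
  classical
  set sq : Set (ℝ × ℝ) := Icc (0:ℝ) T ×ˢ Icc (0:ℝ) T with hsq
  set π : ℝ → ℝ := fun x => max 0 (min x T) with hπ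
  have hπc : Continuous π := continuous_const.max (continuous_id.min continuous_const)
  have hπmem : ∀ x, π x ∈ Icc (0:ℝ) T := fun x => ⟨le_max_left _ _, max_le hT (min_le_right _ _)⟩
  have hπeq : ∀ x ∈ Icc (0:ℝ) T, π x = x := fun x hx => by
    simp only [hπ]
    rw [min_eq_left hx.2, max_eq_right hx.1]
  set C' : ℝ → ℝ → ℝ := fun u v => C (π u) (π v) with hC'def
  have hC'c : Continuous (Function.uncurry C') := by
    have h1 : Function.uncurry C' = (Function.uncurry C) ∘ (fun p : ℝ × ℝ => (π p.1, π p.2)) := rfl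
    rw [h1]
    exact hC.comp_continuous
      ((hπc.comp continuous_fst).prodMk (hπc.comp continuous_snd))
      (fun p => ⟨hπmem _, hπmem _⟩)
  have hC'K : ∀ u v, |C' u v| ≤ K := fun u v => hCK _ (hπmem u) _ (hπmem v)
  have hC'eq : ∀ u ∈ Icc (0:ℝ) T, ∀ v ∈ Icc (0:ℝ) T, C' u v = C u v := by
    intro u hu v hv
    simp only [hC'def]
    rw [hπeq u hu, hπeq v hv]
  have hpc : ∀ n, Continuous (Function.uncurry (GoursatAux.pic C' n)) := GoursatAux.pic_cont hC'c
  have hdb := GoursatAux.pic_diff_bound hC'c hK hC'K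
  -- U agrees with the Picard iterates on the square
  have hUP : ∀ n, ∀ s ∈ Icc (0:ℝ) T, ∀ t ∈ Icc (0:ℝ) T, U n s t = GoursatAux.pic C' n s t := by
    intro n
    induction n with
    | zero => intro s _ t _; rw [hU0]; rfl
    | succ n ih =>
      intro s hs t ht
      rw [hUrec, GoursatAux.pic_succ]
      congr 1
      refine intervalIntegral.integral_congr fun u hu => ?_
      rw [Set.uIcc_of_le hs.1] at hu
      have hu' : u ∈ Icc (0:ℝ) T := ⟨hu.1, hu.2.trans hs.2⟩
      refine intervalIntegral.integral_congr fun v hv => ?_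
      rw [Set.uIcc_of_le ht.1] at hv
      have hv' : v ∈ Icc (0:ℝ) T := ⟨hv.1, hv.2.trans ht.2⟩
      rw [hC'eq u hu' v hv', ih u hu' v hv']
  -- the telescoping series
  set f : ℕ → ℝ × ℝ → ℝ := fun n p =>
    GoursatAux.pic C' (n+1) (π p.1) (π p.2) - GoursatAux.pic C' n (π p.1) (π p.2) with hf
  have hπ2 : Continuous fun p : ℝ × ℝ => (π p.1, π p.2) :=
    (hπc.comp continuous_fst).prodMk (hπc.comp continuous_snd)
  have hfc : ∀ n, Continuous (f n) := fun n =>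
    ((hpc (n+1)).comp hπ2).sub ((hpc n).comp hπ2)
  set M : ℕ → ℝ := fun n => K ^ (n+1) * T ^ (n+1) * T ^ (n+1) / ((n+1).factorial : ℝ) ^ 2 with hM
  have hfM : ∀ n p, ‖f n p‖ ≤ M n := by
    intro n p
    have h1 := hdb n (π p.1) (π p.2) (hπmem p.1).1 (hπmem p.2).1
    refine h1.trans ?_
    simp only [hM]
    obtain ⟨ha1, ha2⟩ := hπmem p.1
    obtain ⟨hb1, hb2⟩ := hπmem p.2
    gcongr
  have hMnonneg : ∀ n, 0 ≤ M n := by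
    intro n; simp only [hM]; positivity
  have hMsum : Summable M := by
    have key : ∀ n, M n ≤ (K * T * T) ^ (n+1) / ((n+1).factorial : ℝ) := by
      intro n
      have h1 : (1:ℝ) ≤ ((n+1).factorial : ℝ) := by
        exact_mod_cast Nat.one_le_iff_ne_zero.2 (Nat.factorial_ne_zero _)
      have h0 : (0:ℝ) ≤ (K * T * T) ^ (n+1) := by positivity
      calc M n = (K * T * T) ^ (n+1) / ((n+1).factorial : ℝ) ^ 2 := by
            simp only [hM]; rw [mul_pow, mul_pow]
        _ ≤ (K * T * T) ^ (n+1) / ((n+1).factorial : ℝ) :=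
            div_le_div_of_nonneg_left h0 (by linarith) (by nlinarith)
    exact Summable.of_nonneg_of_le hMnonneg key
      ((summable_nat_add_iff 1).2 (Real.summable_pow_div_factorial (K * T * T)))
  -- the limit function
  set L : ℝ → ℝ → ℝ := fun s t => 1 + ∑' n, f n (s, t) with hL
  have hLc : Continuous (Function.uncurry L) := by
    have h1 : Continuous fun p : ℝ × ℝ => ∑' n, f n p :=
      continuous_tsum hfc hMsum (fun n x => hfM n x)
    exact continuous_const.add h1
  -- partial sums telescope
  have hpart : ∀ n, ∀ p : ℝ × ℝ, p.1 ∈ Icc (0:ℝ) T → p.2 ∈ Icc (0:ℝ) T →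
      (∑ i ∈ Finset.range n, f i p) = GoursatAux.pic C' n p.1 p.2 - 1 := by
    intro n p hs ht
    obtain ⟨s, t⟩ := p
    simp only at hs ht ⊢
    have hps : π s = s := hπeq s hs
    have hpt : π t = t := hπeq t ht
    simp only [hf, hps, hpt]
    rw [Finset.sum_range_sub (fun i => GoursatAux.pic C' i s t)]
    simp [GoursatAux.pic]
  have htuo0 := tendstoUniformlyOn_tsum_nat hMsum (s := sq) (fun n x _ => hfM n x)
  -- uniform convergence of the Picard iterates
  have htuoPic : TendstoUniformlyOn (fun n (p : ℝ × ℝ) => GoursatAux.pic C' n p.1 p.2)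
      (fun p => L p.1 p.2) Filter.atTop sq := by
    have h1 : TendstoUniformlyOn (fun N (p : ℝ × ℝ) => 1 + ∑ n ∈ Finset.range N, f n p)
        (fun p => 1 + ∑' n, f n p) Filter.atTop sq := by
      rw [Metric.tendstoUniformlyOn_iff] at htuo0 ⊢
      intro ε hε
      filter_upwards [htuo0 ε hε] with n hn x hx
      simpa [Real.dist_eq] using hn x hx
    refine h1.congr (Filter.Eventually.of_forall fun n p hp => ?_)
    obtain ⟨hp1, hp2⟩ := hp
    dsimp only
    rw [hpart n p hp1 hp2]
    ring
  have htuoU : TendstoUniformlyOn (fun n (p : ℝ × ℝ) => U n p.1 p.2)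
      (fun p => L p.1 p.2) Filter.atTop sq := by
    refine htuoPic.congr (Filter.Eventually.of_forall fun n p hp => ?_)
    obtain ⟨hp1, hp2⟩ := hp
    exact (hUP n p.1 hp1 p.2 hp2).symm
  -- the integral equation for L
  have heqn : ∀ s ∈ Icc (0:ℝ) T, ∀ t ∈ Icc (0:ℝ) T,
      L s t = 1 + ∫ u in (0:ℝ)..s, ∫ v in (0:ℝ)..t, C u v * L u v := by
    intro s hs t ht
    have hmem : (s, t) ∈ sq := ⟨hs, ht⟩
    -- pointwise convergence of the iterates at (s, t)
    have hsumpt : Summable (fun n => f n (s, t)) :=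
      Summable.of_norm_bounded hMsum (fun n => hfM n (s, t))
    have h1 : Filter.Tendsto (fun n => GoursatAux.pic C' n s t) Filter.atTop (nhds (L s t)) := by
      have h2 := hsumpt.hasSum.tendsto_sum_nat
      have h3 : ∀ n, GoursatAux.pic C' n s t = 1 + ∑ i ∈ Finset.range n, f i (s, t) := by
        intro n; rw [hpart n (s, t) hs ht]; ring
      have h4 : Filter.Tendsto (fun n => 1 + ∑ i ∈ Finset.range n, f i (s, t))
          Filter.atTop (nhds (1 + ∑' n, f n (s, t))) := tendsto_const_nhds.add h2
      exact Filter.Tendsto.congr (fun n => (h3 n).symm) h4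
    have h1' : Filter.Tendsto (fun n => GoursatAux.pic C' (n+1) s t)
        Filter.atTop (nhds (L s t)) := h1.comp (Filter.tendsto_add_atTop_nat 1)
    have hLc2 : Continuous (Function.uncurry fun u v => C' u v * L u v) := hC'c.mul hLc
    -- convergence of the double integrals
    have hIL : Filter.Tendsto
        (fun n => ∫ u in (0:ℝ)..s, ∫ v in (0:ℝ)..t, C' u v * GoursatAux.pic C' n u v)
        Filter.atTop
        (nhds (∫ u in (0:ℝ)..s, ∫ v in (0:ℝ)..t, C' u v * L u v)) := by
      rw [Metric.tendsto_atTop]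
      intro ε hε
      have hst : (0:ℝ) ≤ K * s * t := mul_nonneg (mul_nonneg hK hs.1) ht.1
      obtain ⟨ε', hε'⟩ : ∃ x : ℝ, x = ε / (K * s * t + 1) := ⟨_, rfl⟩
      have hε'pos : 0 < ε' := hε' ▸ div_pos hε (by linarith)
      have hpic' := Metric.tendstoUniformlyOn_iff.1 htuoPic ε' hε'pos
      obtain ⟨N, hN⟩ := Filter.eventually_atTop.1 hpic'
      refine ⟨N, fun n hn => ?_⟩
      have hFc : Continuous (Function.uncurry fun u v => C' u v * GoursatAux.pic C' n u v) :=
        hC'c.mul (hpc n)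
      rw [Real.dist_eq]
      have hsub := GoursatAux.double_sub hFc hLc2 s t
      rw [hsub]
      have hbb : ∀ u ∈ Icc (0:ℝ) s, ∀ v ∈ Icc (0:ℝ) t,
          |C' u v * GoursatAux.pic C' n u v - C' u v * L u v| ≤ K * ε' := by
        intro u hu v hv
        have humem : u ∈ Icc (0:ℝ) T := ⟨hu.1, hu.2.trans hs.2⟩
        have hvmem : v ∈ Icc (0:ℝ) T := ⟨hv.1, hv.2.trans ht.2⟩
        have hd := hN n hn (u, v) ⟨humem, hvmem⟩
        rw [Real.dist_eq] at hd
        have hd' : |GoursatAux.pic C' n u v - L u v| ≤ ε' := by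
          rw [abs_sub_comm]; exact le_of_lt hd
        calc |C' u v * GoursatAux.pic C' n u v - C' u v * L u v|
            = |C' u v| * |GoursatAux.pic C' n u v - L u v| := by rw [← mul_sub, abs_mul]
          _ ≤ K * ε' := mul_le_mul (hC'K u v) hd' (abs_nonneg _) hK
      have hbd := GoursatAux.double_bound (F := fun u v =>
          C' u v * GoursatAux.pic C' n u v - C' u v * L u v)
        (B := fun _ _ => K * ε') (hFc.sub hLc2) continuous_const hs.1 ht.1 hbb
      have hconst : (∫ u in (0:ℝ)..s, ∫ v in (0:ℝ)..t, K * ε') = K * ε' * t * s := by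
        simp [intervalIntegral.integral_const, smul_eq_mul]
        ring
      rw [hconst] at hbd
      refine lt_of_le_of_lt hbd ?_
      have hD : (0:ℝ) < K * s * t + 1 := by linarith
      calc K * ε' * t * s = ε * (K * s * t) / (K * s * t + 1) := by rw [hε']; ring
        _ < ε := by rw [div_lt_iff₀ hD]; nlinarith
    have h2' : Filter.Tendsto
        (fun n => 1 + ∫ u in (0:ℝ)..s, ∫ v in (0:ℝ)..t, C' u v * GoursatAux.pic C' n u v)
        Filter.atTop
        (nhds (1 + ∫ u in (0:ℝ)..s, ∫ v in (0:ℝ)..t, C' u v * L u v)) :=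
      tendsto_const_nhds.add hIL
    have h3 : (fun n => GoursatAux.pic C' (n+1) s t)
        = fun n => 1 + ∫ u in (0:ℝ)..s, ∫ v in (0:ℝ)..t, C' u v * GoursatAux.pic C' n u v :=
      funext fun n => GoursatAux.pic_succ C' n s t
    have hfinal : L s t = 1 + ∫ u in (0:ℝ)..s, ∫ v in (0:ℝ)..t, C' u v * L u v := by
      refine tendsto_nhds_unique h1' ?_
      rw [h3]
      exact h2'
    rw [hfinal]
    congr 1
    refine intervalIntegral.integral_congr fun u hu => ?_
    rw [Set.uIcc_of_le hs.1] at hu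
    have hu' : u ∈ Icc (0:ℝ) T := ⟨hu.1, hu.2.trans hs.2⟩
    refine intervalIntegral.integral_congr fun v hv => ?_
    rw [Set.uIcc_of_le ht.1] at hv
    have hv' : v ∈ Icc (0:ℝ) T := ⟨hv.1, hv.2.trans ht.2⟩
    rw [hC'eq u hu' v hv']
  refine ⟨⟨L, hLc.continuousOn, htuoU, heqn⟩, ?_⟩
  intro n s hs t ht
  rw [hUP (n+1) s hs t ht, hUP n s hs t ht]
  have h1 := hdb n s t hs.1 ht.1
  calc |GoursatAux.pic C' (n+1) s t - GoursatAux.pic C' n s t|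
      ≤ K ^ (n+1) * s ^ (n+1) * t ^ (n+1) / ((n+1).factorial : ℝ) ^ 2 := h1
    _ = (K * s * t) ^ (n+1) / ((Nat.factorial (n+1) : ℝ)) ^ 2 := by rw [mul_pow, mul_pow]
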